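/- Detailed balance for the k-player logit dynamic: for all states S, S' ∈ 𝒮_n, exp(Φ(S)/β) · P_k(S, S') = exp(Φ(S')/β) · P_k(S', S). -/

import Mathlib

open Finset

noncomputable section

/-- A network state: the diagonal entry `S i i` is player `i`'s action status `a_i`,
and the off-diagonal entry `S i j` (for `i ≠ j`) is the link status `g_{ij}`. -/
abbrev NetState (n : ℕ) := Fin n → Fin n → Bool

/-- Numerical (0/1) value of a Boolean coordinate. -/
def bv (x : Bool) : ℝ := if x then 1 else 0

/-- Player `i`'s payoff
`u_i(S) = a_i v_i + h a_i Σ_{j≠i} a_j + φ a_i Σ_{j≠i} g_{ij} g_{ji} a_j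
  + Σ_{j≠i} g_{ij} w_{ij} + m Σ_{j≠i} g_{ij} g_{ji}
  + q Σ_{j,l pairwise distinct from each other and from i} g_{ij} g_{jl} g_{li}`. -/
def payoff (n : ℕ) (v : Fin n → ℝ) (w : Fin n → Fin n → ℝ) (h φ m q : ℝ)
    (S : NetState n) (i : Fin n) : ℝ :=
  bv (S i i) * v i
    + h * bv (S i i) * ∑ j ∈ univ.filter (fun j => j ≠ i), bv (S j j)
    + φ * bv (S i i) * ∑ j ∈ univ.filter (fun j => j ≠ i), bv (S i j) * bv (S j i) * bv (S j j)
    + ∑ j ∈ univ.filter (fun j => j ≠ i), bv (S i j) * w i j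
    + m * ∑ j ∈ univ.filter (fun j => j ≠ i), bv (S i j) * bv (S j i)
    + q * ∑ j ∈ univ.filter (fun j => j ≠ i),
        ∑ l ∈ univ.filter (fun l => l ≠ i ∧ l ≠ j),
          bv (S i j) * bv (S j l) * bv (S l i)

/-- The potential
`Φ(S) = Σ_i a_i v_i + (h/2) Σ_{i≠j} a_i a_j + (φ/2) Σ_{i≠j} a_i a_j g_{ij} g_{ji}
  + Σ_{i≠j} g_{ij} w_{ij} + (m/2) Σ_{i≠j} g_{ij} g_{ji}
  + (q/3) Σ_{i,j,l pairwise distinct} g_{ij} g_{jl} g_{li}`. -/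
def potential (n : ℕ) (v : Fin n → ℝ) (w : Fin n → Fin n → ℝ) (h φ m q : ℝ)
    (S : NetState n) : ℝ :=
  (∑ i, bv (S i i) * v i)
    + (h / 2) * ∑ i, ∑ j ∈ univ.filter (fun j => j ≠ i), bv (S i i) * bv (S j j)
    + (φ / 2) * ∑ i, ∑ j ∈ univ.filter (fun j => j ≠ i),
        bv (S i i) * bv (S j j) * bv (S i j) * bv (S j i)
    + (∑ i, ∑ j ∈ univ.filter (fun j => j ≠ i), bv (S i j) * w i j)
    + (m / 2) * ∑ i, ∑ j ∈ univ.filter (fun j => j ≠ i), bv (S i j) * bv (S j i)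
    + (q / 3) * ∑ i, ∑ j ∈ univ.filter (fun j => j ≠ i),
        ∑ l ∈ univ.filter (fun l => l ≠ i ∧ l ≠ j), bv (S i j) * bv (S j l) * bv (S l i)

/-- `S'` belongs to the neighborhood `N_k((i,J), S)`: it agrees with `S` on all coordinates
except possibly `a_i` (the coordinate `(i,i)`) and the links `{g_{ij} : j ∈ J}`. -/
def inNbhd (n : ℕ) (i : Fin n) (J : Finset (Fin n)) (S S' : NetState n) : Prop :=
  ∀ x y : Fin n, ¬(x = i ∧ (y = i ∨ y ∈ J)) → S' x y = S x y

open scoped Classical in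
/-- The neighborhood `N_k((i,J), S)` as a finite set of states. -/
noncomputable def nbhd (n : ℕ) (i : Fin n) (J : Finset (Fin n)) (S : NetState n) :
    Finset (NetState n) :=
  univ.filter (fun S' => inNbhd n i J S S')

open scoped Classical in
/-- Meetings of dimension `k`: pairs `(i, J)` with `i ∉ J` and `|J| = k - 1`. -/
noncomputable def meetings (n k : ℕ) : Finset (Fin n × Finset (Fin n)) :=
  univ.filter (fun μ => μ.1 ∉ μ.2 ∧ μ.2.card = k - 1)

open scoped Classical in
/-- One-step transition kernel of the `k`-player logit dynamic:
`P_k(S, S') = Σ_{μ=(i,J) : S' ∈ N_k(μ,S)} q(μ) · exp(u_i(S')/β) / Σ_{T ∈ N_k(μ,S)} exp(u_i(T)/β)`. -/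
noncomputable def kernel (n : ℕ) (v : Fin n → ℝ) (w : Fin n → Fin n → ℝ) (h φ m q : ℝ)
    (β : ℝ) (k : ℕ) (qm : Fin n × Finset (Fin n) → ℝ) (S S' : NetState n) : ℝ :=
  ∑ μ ∈ (meetings n k).filter (fun μ => S' ∈ nbhd n μ.1 μ.2 S),
    qm μ * Real.exp (payoff n v w h φ m q S' μ.1 / β)
      / ∑ T ∈ nbhd n μ.1 μ.2 S, Real.exp (payoff n v w h φ m q T μ.1 / β)

section Aux

variable {n : ℕ}

lemma filt2 (a b : Fin n) :
    univ.filter (fun l => l ≠ a ∧ l ≠ b) = (univ.erase a).erase b := by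
  ext l; simp [Finset.mem_erase, and_comm]

lemma split1 (i : Fin n) (g : Fin n → ℝ) :
    ∑ x, g x = g i + ∑ x ∈ univ.erase i, g x :=
  (Finset.add_sum_erase univ g (mem_univ i)).symm

lemma split2 (i : Fin n) (f : Fin n → Fin n → ℝ) :
    ∑ x, ∑ y ∈ univ.erase x, f x y
      = (∑ y ∈ univ.erase i, f i y) + ((∑ x ∈ univ.erase i, f x i)
        + ∑ x ∈ univ.erase i, ∑ y ∈ (univ.erase x).erase i, f x y) := by
  rw [split1 i (fun x => ∑ y ∈ univ.erase x, f x y)]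
  congr 1
  rw [← Finset.sum_add_distrib]
  refine Finset.sum_congr rfl ?_
  intro x hx
  have hxi : i ∈ univ.erase x := by
    simp only [Finset.mem_erase, Finset.mem_univ, and_true] at hx ⊢
    exact fun hh => hx hh.symm
  exact (Finset.add_sum_erase _ (f x) hxi).symm

lemma split3 (i : Fin n) (f : Fin n → Fin n → Fin n → ℝ) :
    ∑ x, ∑ j ∈ univ.erase x, ∑ l ∈ (univ.erase x).erase j, f x j l
      = (∑ j ∈ univ.erase i, ∑ l ∈ (univ.erase i).erase j, f i j l)
        + ((∑ x ∈ univ.erase i, ∑ l ∈ (univ.erase x).erase i, f x i l)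
        + ((∑ x ∈ univ.erase i, ∑ j ∈ (univ.erase x).erase i, f x j i)
        + ∑ x ∈ univ.erase i, ∑ j ∈ (univ.erase x).erase i,
            ∑ l ∈ ((univ.erase x).erase j).erase i, f x j l)) := by
  rw [split1 i (fun x => ∑ j ∈ univ.erase x, ∑ l ∈ (univ.erase x).erase j, f x j l)]
  congr 1
  rw [← Finset.sum_add_distrib, ← Finset.sum_add_distrib]
  refine Finset.sum_congr rfl ?_
  intro x hx
  have hxne : x ≠ i := by
    simp only [Finset.mem_erase, Finset.mem_univ, and_true] at hx; exact hx
  have hxi : i ∈ univ.erase x := by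
    simp only [Finset.mem_erase, Finset.mem_univ, and_true]
    exact fun hh => hxne hh.symm
  rw [← Finset.add_sum_erase _ (fun j => ∑ l ∈ (univ.erase x).erase j, f x j l) hxi]
  congr 1
  rw [← Finset.sum_add_distrib]
  refine Finset.sum_congr rfl ?_
  intro j hj
  have hji : i ∈ (univ.erase x).erase j := by
    simp only [Finset.mem_erase, Finset.mem_univ, and_true] at hj ⊢
    exact ⟨fun hh => hj.1 hh.symm, fun hh => hxne hh.symm⟩
  exact (Finset.add_sum_erase _ (f x j) hji).symm

/-- The part of the potential not depending on row `i`. -/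
def rest (n : ℕ) (v : Fin n → ℝ) (w : Fin n → Fin n → ℝ) (h φ m q : ℝ)
    (S : NetState n) (i : Fin n) : ℝ :=
  (∑ x ∈ univ.erase i, bv (S x x) * v x)
    + (h / 2) * ∑ x ∈ univ.erase i, ∑ y ∈ (univ.erase x).erase i,
        bv (S x x) * bv (S y y)
    + (φ / 2) * ∑ x ∈ univ.erase i, ∑ y ∈ (univ.erase x).erase i,
        bv (S x x) * bv (S y y) * bv (S x y) * bv (S y x)
    + ((∑ x ∈ univ.erase i, bv (S x i) * w x i)
        + ∑ x ∈ univ.erase i, ∑ y ∈ (univ.erase x).erase i, bv (S x y) * w x y)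
    + (m / 2) * ∑ x ∈ univ.erase i, ∑ y ∈ (univ.erase x).erase i,
        bv (S x y) * bv (S y x)
    + (q / 3) * ∑ x ∈ univ.erase i, ∑ j ∈ (univ.erase x).erase i,
        ∑ l ∈ ((univ.erase x).erase j).erase i, bv (S x j) * bv (S j l) * bv (S l x)

lemma potential_eq (v : Fin n → ℝ) (w : Fin n → Fin n → ℝ) (h φ m q : ℝ)
    (S : NetState n) (i : Fin n) :
    potential n v w h φ m q S = payoff n v w h φ m q S i + rest n v w h φ m q S i := by
  unfold potential payoff rest
  simp only [filt2, Finset.filter_ne']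
  rw [split3 i (fun x j l => bv (S x j) * bv (S j l) * bv (S l x)),
    split2 i (fun x y => bv (S x x) * bv (S y y)),
    split2 i (fun x y => bv (S x x) * bv (S y y) * bv (S x y) * bv (S y x)),
    split2 i (fun x y => bv (S x y) * w x y),
    split2 i (fun x y => bv (S x y) * bv (S y x)),
    split1 i (fun x => bv (S x x) * v x)]
  have hA : ∑ x ∈ univ.erase i, bv (S x x) * bv (S i i)
      = bv (S i i) * ∑ j ∈ univ.erase i, bv (S j j) := by
    rw [Finset.mul_sum]; exact Finset.sum_congr rfl fun x _ => mul_comm _ _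
  have hA' : ∑ y ∈ univ.erase i, bv (S i i) * bv (S y y)
      = bv (S i i) * ∑ j ∈ univ.erase i, bv (S j j) := (Finset.mul_sum _ _ _).symm
  have hB : ∑ y ∈ univ.erase i, bv (S i i) * bv (S y y) * bv (S i y) * bv (S y i)
      = bv (S i i) * ∑ j ∈ univ.erase i, bv (S i j) * bv (S j i) * bv (S j j) := by
    rw [Finset.mul_sum]; exact Finset.sum_congr rfl fun x _ => by ring
  have hB' : ∑ x ∈ univ.erase i, bv (S x x) * bv (S i i) * bv (S x i) * bv (S i x)
      = bv (S i i) * ∑ j ∈ univ.erase i, bv (S i j) * bv (S j i) * bv (S j j) := by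
    rw [Finset.mul_sum]; exact Finset.sum_congr rfl fun x _ => by ring
  have hM : ∑ x ∈ univ.erase i, bv (S x i) * bv (S i x)
      = ∑ j ∈ univ.erase i, bv (S i j) * bv (S j i) :=
    Finset.sum_congr rfl fun x _ => mul_comm _ _
  have hC : ∑ x ∈ univ.erase i, ∑ l ∈ (univ.erase x).erase i,
        bv (S x i) * bv (S i l) * bv (S l x)
      = ∑ j ∈ univ.erase i, ∑ l ∈ (univ.erase i).erase j,
        bv (S i j) * bv (S j l) * bv (S l i) := by
    rw [Finset.sum_comm' (s := univ.erase i) (t := fun x => (univ.erase x).erase i)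
      (t' := univ.erase i) (s' := fun l => (univ.erase l).erase i)
      (by intro x l
          simp only [Finset.mem_erase, Finset.mem_univ, and_true]
          tauto)]
    refine Finset.sum_congr rfl fun j _ => ?_
    rw [Finset.erase_right_comm]
    exact Finset.sum_congr rfl fun l _ => by ring
  have hD : ∑ x ∈ univ.erase i, ∑ j ∈ (univ.erase x).erase i,
        bv (S x j) * bv (S j i) * bv (S i x)
      = ∑ j ∈ univ.erase i, ∑ l ∈ (univ.erase i).erase j,
        bv (S i j) * bv (S j l) * bv (S l i) := by
    refine Finset.sum_congr rfl fun x _ => ?_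
    rw [Finset.erase_right_comm]
    exact Finset.sum_congr rfl fun j _ => by ring
  rw [hA, hA', hB, hB', hM, hC, hD]
  ring

lemma rest_congr (v : Fin n → ℝ) (w : Fin n → Fin n → ℝ) (h φ m q : ℝ)
    (S S' : NetState n) (i : Fin n) (hag : ∀ x y, x ≠ i → S x y = S' x y) :
    rest n v w h φ m q S i = rest n v w h φ m q S' i := by
  have hne : ∀ x : Fin n, x ∈ univ.erase i → x ≠ i := fun x hx => (Finset.mem_erase.mp hx).1
  have hne2 : ∀ (x y : Fin n), y ∈ (univ.erase x).erase i → y ≠ i :=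
    fun x y hy => (Finset.mem_erase.mp hy).1
  have hne3 : ∀ (x j l : Fin n), l ∈ ((univ.erase x).erase j).erase i → l ≠ i :=
    fun x j l hl => (Finset.mem_erase.mp hl).1
  unfold rest
  have t1 : ∑ x ∈ univ.erase i, bv (S x x) * v x = ∑ x ∈ univ.erase i, bv (S' x x) * v x :=
    Finset.sum_congr rfl fun x hx => by rw [hag x x (hne x hx)]
  have t2 : ∑ x ∈ univ.erase i, ∑ y ∈ (univ.erase x).erase i, bv (S x x) * bv (S y y)
      = ∑ x ∈ univ.erase i, ∑ y ∈ (univ.erase x).erase i, bv (S' x x) * bv (S' y y) :=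
    Finset.sum_congr rfl fun x hx => Finset.sum_congr rfl fun y hy => by
      rw [hag x x (hne x hx), hag y y (hne2 x y hy)]
  have t3 : ∑ x ∈ univ.erase i, ∑ y ∈ (univ.erase x).erase i,
        bv (S x x) * bv (S y y) * bv (S x y) * bv (S y x)
      = ∑ x ∈ univ.erase i, ∑ y ∈ (univ.erase x).erase i,
        bv (S' x x) * bv (S' y y) * bv (S' x y) * bv (S' y x) :=
    Finset.sum_congr rfl fun x hx => Finset.sum_congr rfl fun y hy => by
      rw [hag x x (hne x hx), hag y y (hne2 x y hy), hag x y (hne x hx),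
        hag y x (hne2 x y hy)]
  have t4 : ∑ x ∈ univ.erase i, bv (S x i) * w x i
      = ∑ x ∈ univ.erase i, bv (S' x i) * w x i :=
    Finset.sum_congr rfl fun x hx => by rw [hag x i (hne x hx)]
  have t5 : ∑ x ∈ univ.erase i, ∑ y ∈ (univ.erase x).erase i, bv (S x y) * w x y
      = ∑ x ∈ univ.erase i, ∑ y ∈ (univ.erase x).erase i, bv (S' x y) * w x y :=
    Finset.sum_congr rfl fun x hx => Finset.sum_congr rfl fun y _ => by
      rw [hag x y (hne x hx)]
  have t6 : ∑ x ∈ univ.erase i, ∑ y ∈ (univ.erase x).erase i, bv (S x y) * bv (S y x)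
      = ∑ x ∈ univ.erase i, ∑ y ∈ (univ.erase x).erase i, bv (S' x y) * bv (S' y x) :=
    Finset.sum_congr rfl fun x hx => Finset.sum_congr rfl fun y hy => by
      rw [hag x y (hne x hx), hag y x (hne2 x y hy)]
  have t7 : ∑ x ∈ univ.erase i, ∑ j ∈ (univ.erase x).erase i,
        ∑ l ∈ ((univ.erase x).erase j).erase i, bv (S x j) * bv (S j l) * bv (S l x)
      = ∑ x ∈ univ.erase i, ∑ j ∈ (univ.erase x).erase i,
        ∑ l ∈ ((univ.erase x).erase j).erase i, bv (S' x j) * bv (S' j l) * bv (S' l x) :=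
    Finset.sum_congr rfl fun x hx => Finset.sum_congr rfl fun j hj =>
      Finset.sum_congr rfl fun l hl => by
        rw [hag x j (hne x hx), hag j l (hne2 x j hj), hag l x (hne3 x j l hl)]
  rw [t1, t2, t3, t4, t5, t6, t7]

end Aux

/-- **Detailed balance for the `k`-player logit dynamic.** For all states `S, S'`,
`exp(Φ(S)/β) · P_k(S, S') = exp(Φ(S')/β) · P_k(S', S)`. -/
theorem detailed_balance (n k : ℕ) (hk : 1 < k) (hkn : k ≤ n)
    (v : Fin n → ℝ) (w : Fin n → Fin n → ℝ) (h φ m q : ℝ) (β : ℝ) (hβ : 0 < β)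
    (qm : Fin n × Finset (Fin n) → ℝ)
    (hqpos : ∀ μ ∈ meetings n k, 0 < qm μ)
    (hqsum : ∑ μ ∈ meetings n k, qm μ = 1)
    (S S' : NetState n) :
    Real.exp (potential n v w h φ m q S / β) * kernel n v w h φ m q β k qm S S'
      = Real.exp (potential n v w h φ m q S' / β) * kernel n v w h φ m q β k qm S' S := by
  classical
  unfold kernel
  rw [Finset.mul_sum, Finset.mul_sum]
  have hset : (meetings n k).filter (fun μ => S' ∈ nbhd n μ.1 μ.2 S)
      = (meetings n k).filter (fun μ => S ∈ nbhd n μ.1 μ.2 S') := by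
    apply Finset.filter_congr
    intro μ _
    simp only [nbhd, Finset.mem_filter, Finset.mem_univ, true_and]; simp only [inNbhd]
    constructor <;> exact fun hh x y hp => (hh x y hp).symm
  rw [hset]
  refine Finset.sum_congr rfl ?_
  intro μ hμ
  have hmem : inNbhd n μ.1 μ.2 S' S := by
    simp only [Finset.mem_filter, nbhd, Finset.mem_univ, true_and] at hμ
    exact hμ.2
  have hag : ∀ x y, x ≠ μ.1 → S x y = S' x y :=
    fun x y hx => hmem x y (fun hp => hx hp.1)
  have hnb : nbhd n μ.1 μ.2 S = nbhd n μ.1 μ.2 S' := by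
    ext T
    simp only [nbhd, Finset.mem_filter, Finset.mem_univ, true_and]; simp only [inNbhd]
    constructor
    · intro hT x y hp; rw [hT x y hp]; exact hmem x y hp
    · intro hT x y hp; rw [hT x y hp]; exact (hmem x y hp).symm
  have hpot : potential n v w h φ m q S + payoff n v w h φ m q S' μ.1
      = potential n v w h φ m q S' + payoff n v w h φ m q S μ.1 := by
    rw [potential_eq v w h φ m q S μ.1, potential_eq v w h φ m q S' μ.1,
      rest_congr v w h φ m q S S' μ.1 hag]
    ring
  have hexp : Real.exp (potential n v w h φ m q S / β)
        * Real.exp (payoff n v w h φ m q S' μ.1 / β)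
      = Real.exp (potential n v w h φ m q S' / β)
        * Real.exp (payoff n v w h φ m q S μ.1 / β) := by
    rw [← Real.exp_add, ← Real.exp_add, ← add_div, ← add_div, hpot]
  rw [hnb]
  set Z := ∑ T ∈ nbhd n μ.1 μ.2 S', Real.exp (payoff n v w h φ m q T μ.1 / β) with hZ
  calc Real.exp (potential n v w h φ m q S / β)
        * (qm μ * Real.exp (payoff n v w h φ m q S' μ.1 / β) / Z)
      = (Real.exp (potential n v w h φ m q S / β)
          * Real.exp (payoff n v w h φ m q S' μ.1 / β)) * (qm μ / Z) := by ring
    _ = (Real.exp (potential n v w h φ m q S' / β)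
          * Real.exp (payoff n v w h φ m q S μ.1 / β)) * (qm μ / Z) := by rw [hexp]
    _ = Real.exp (potential n v w h φ m q S' / β)
          * (qm μ * Real.exp (payoff n v w h φ m q S μ.1 / β) / Z) := by ring
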